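/- The shaping correction term in the EPIC canonicalization arising from a potential-shaped reward telescopes: for the shaped reward R'(s,a,s') = R(s,a,s') + γΦ(s') − Φ(s), the difference C(R')(s,a,s') − C(R)(s,a,s') equals (γΦ(s') − Φ(s)) − E[γΦ(S') − Φ(s)] + E[γ²Φ(S') − γΦ(s')] − E[γ²Φ(S') − γΦ(S)] where S, S' are independent with law D_S, and this difference equals zero. -/

import Mathlib

open MeasureTheory

/-- The EPIC canonicalization of a reward function. -/
noncomputable def epicC {S A : Type*} [MeasurableSpace S] [MeasurableSpace A]
    (μS : Measure S) (μA : Measure A) (γ : ℝ) (R : S → A → S → ℝ) : S → A → S → ℝ :=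
  fun s _a s' =>
    R s _a s' + (∫ a', (∫ x', γ * R s' a' x' ∂μS) ∂μA)
      - (∫ a', (∫ x', R s a' x' ∂μS) ∂μA)
      - γ * (∫ x, (∫ a', (∫ x', R x a' x' ∂μS) ∂μA) ∂μS)

/-- The shaping correction term arising in the EPIC canonicalization of a
potential-shaped reward:
(γΦ(s') − Φ(s)) − E[γΦ(S') − Φ(s)] + E[γ²Φ(S') − γΦ(s')] − E[γ²Φ(S') − γΦ(S)],
with S, S' independent with law μS. -/
noncomputable def shapingCorrection {S : Type*} [MeasurableSpace S]
    (μS : Measure S) (γ : ℝ) (Φ : S → ℝ) (s s' : S) : ℝ :=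
  (γ * Φ s' - Φ s) - (∫ x', (γ * Φ x' - Φ s) ∂μS)
    + (∫ x', (γ ^ 2 * Φ x' - γ * Φ s') ∂μS)
    - (∫ x, (∫ x', (γ ^ 2 * Φ x' - γ * Φ x) ∂μS) ∂μS)

/-- For the shaped reward R'(s,a,s') = R(s,a,s') + γΦ(s') − Φ(s), the
difference C(R') − C(R) equals the shaping correction term, and this term telescopes
to zero. -/
theorem epic_shaping_correction_telescopes {S A : Type*}
    [MeasurableSpace S] [MeasurableSpace A]
    (μS : Measure S) (μA : Measure A)
    [IsProbabilityMeasure μS] [IsProbabilityMeasure μA]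
    (γ : ℝ) (hγ : γ ∈ Set.Icc (0 : ℝ) 1)
    (R : S → A → S → ℝ)
    (hRm : Measurable fun p : S × A × S => R p.1 p.2.1 p.2.2)
    (hRb : ∃ M, ∀ s a s', |R s a s'| ≤ M)
    (Φ : S → ℝ) (hΦm : Measurable Φ) (hΦb : ∃ M, ∀ s, |Φ s| ≤ M)
    (R' : S → A → S → ℝ)
    (hR' : ∀ s a s', R' s a s' = R s a s' + γ * Φ s' - Φ s) :
    (∀ s a s', epicC μS μA γ R' s a s' - epicC μS μA γ R s a s'
        = shapingCorrection μS γ Φ s s') ∧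
      (∀ s s', shapingCorrection μS γ Φ s s' = 0) := by

  obtain ⟨MΦ, hMΦ⟩ := hΦb
  obtain ⟨MR, hMR⟩ := hRb
  have hΦint : Integrable Φ μS :=
    (integrable_const MΦ).mono' hΦm.aestronglyMeasurable
      (Filter.Eventually.of_forall fun x => by simpa using hMΦ x)
  set I : ℝ := ∫ x, Φ x ∂μS with hI
  -- basic integral computation
  have h1 : ∀ (b c : ℝ), (∫ x', (b * Φ x' - c) ∂μS) = b * I - c := by
    intro b c
    rw [integral_sub ((hΦint.const_mul b)) (integrable_const c), integral_const_mul,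
      integral_const]
    simp [hI]
  have hzero : ∀ s s', shapingCorrection μS γ Φ s s' = 0 := by
    intro s s'
    unfold shapingCorrection
    have h2 : (∫ x, (∫ x', (γ ^ 2 * Φ x' - γ * Φ x) ∂μS) ∂μS)
        = γ ^ 2 * I - γ * I := by
      have : (fun x => (∫ x', (γ ^ 2 * Φ x' - γ * Φ x) ∂μS))
          = fun x => γ ^ 2 * I - γ * Φ x := by
        funext x; exact h1 _ _
      rw [this, integral_sub (integrable_const _) (hΦint.const_mul γ),
        integral_const, integral_const_mul]
      simp [hI]
    rw [h1, h1, h2]; ring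
  refine ⟨?_, hzero⟩
  -- integrability of R slices
  have hRint : ∀ t a, Integrable (fun x' => R t a x') μS := by
    intro t a
    have hm : Measurable fun x' => R t a x' :=
      hRm.comp (measurable_const.prodMk (measurable_const.prodMk measurable_id))
    exact (integrable_const MR).mono' hm.aestronglyMeasurable
      (Filter.Eventually.of_forall fun x => by simpa using hMR t a x)
  -- inner integral for R'
  have hinner : ∀ t a, (∫ x', R' t a x' ∂μS) = (∫ x', R t a x' ∂μS) + (γ * I - Φ t) := by
    intro t a
    have : (fun x' => R' t a x') = fun x' => (R t a x' + γ * Φ x') - Φ t := by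
      funext x'; rw [hR']
    have hsum : Integrable (fun x' => R t a x' + γ * Φ x') μS :=
      (hRint t a).add (hΦint.const_mul γ)
    rw [this, integral_sub hsum (integrable_const _),
      integral_add (hRint t a) (hΦint.const_mul γ), integral_const_mul, integral_const]
    simp; ring
  -- measurability of a' ↦ ∫ x', R t a' x'
  have hGsm : ∀ t, StronglyMeasurable fun a' => ∫ x', R t a' x' ∂μS := by
    intro t
    have hm : StronglyMeasurable (Function.uncurry fun (a' : A) (x' : S) => R t a' x') := by
      apply Measurable.stronglyMeasurable
      exact hRm.comp (measurable_const.prodMk measurable_id)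
    exact hm.integral_prod_right
  have hGint : ∀ t, Integrable (fun a' => ∫ x', R t a' x' ∂μS) μA := by
    intro t
    refine (integrable_const MR).mono' (hGsm t).aestronglyMeasurable
      (Filter.Eventually.of_forall fun a' => ?_)
    calc ‖∫ x', R t a' x' ∂μS‖ ≤ MR * (μS Set.univ).toReal := by
          apply norm_integral_le_of_norm_le_const
          exact Filter.Eventually.of_forall fun x => by simpa using hMR t a' x
      _ = MR := by simp
  -- μA-level integrals
  have hGeq : ∀ t, (∫ a', ∫ x', R' t a' x' ∂μS ∂μA)
      = (∫ a', ∫ x', R t a' x' ∂μS ∂μA) + (γ * I - Φ t) := by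
    intro t
    have : (fun a' => ∫ x', R' t a' x' ∂μS)
        = fun a' => (∫ x', R t a' x' ∂μS) + (γ * I - Φ t) := by
      funext a'; exact hinner t a'
    rw [this, integral_add (hGint t) (integrable_const _), integral_const]
    simp
  -- measurability and integrability of F
  have hG'sm : StronglyMeasurable fun p : S × A => ∫ x', R p.1 p.2 x' ∂μS := by
    have hm : StronglyMeasurable (Function.uncurry fun (p : S × A) (x' : S) => R p.1 p.2 x') := by
      apply Measurable.stronglyMeasurable
      exact hRm.comp ((measurable_fst.comp measurable_fst).prodMk
        ((measurable_snd.comp measurable_fst).prodMk measurable_snd))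
    exact hm.integral_prod_right
  have hFsm : StronglyMeasurable fun x => ∫ a', ∫ x', R x a' x' ∂μS ∂μA := by
    exact StronglyMeasurable.integral_prod_right
      (f := fun (x : S) (a' : A) => ∫ x', R x a' x' ∂μS) hG'sm
  have hFint : Integrable (fun x => ∫ a', ∫ x', R x a' x' ∂μS ∂μA) μS := by
    refine (integrable_const MR).mono' hFsm.aestronglyMeasurable
      (Filter.Eventually.of_forall fun x => ?_)
    calc ‖∫ a', ∫ x', R x a' x' ∂μS ∂μA‖ ≤ MR * (μA Set.univ).toReal := by
          apply norm_integral_le_of_norm_le_const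
          refine Filter.Eventually.of_forall fun a' => ?_
          calc ‖∫ x', R x a' x' ∂μS‖ ≤ MR * (μS Set.univ).toReal := by
                apply norm_integral_le_of_norm_le_const
                exact Filter.Eventually.of_forall fun y => by simpa using hMR x a' y
            _ = MR := by simp
      _ = MR := by simp
  -- triple integral
  have hD : (∫ x, ∫ a', ∫ x', R' x a' x' ∂μS ∂μA ∂μS)
      = (∫ x, ∫ a', ∫ x', R x a' x' ∂μS ∂μA ∂μS) + (γ * I - I) := by
    have : (fun x => ∫ a', ∫ x', R' x a' x' ∂μS ∂μA)
        = fun x => ((∫ a', ∫ x', R x a' x' ∂μS ∂μA) + γ * I) - Φ x := by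
      funext x; rw [hGeq]; ring
    have hsum : Integrable (fun x => (∫ a', ∫ x', R x a' x' ∂μS ∂μA) + γ * I) μS :=
      hFint.add (integrable_const _)
    rw [this, integral_sub hsum hΦint,
      integral_add hFint (integrable_const _), integral_const]
    simp only [measure_univ, probReal_univ, one_smul, mul_one, ← hI]
    ring
  -- γ-scaled second term
  have hscale : ∀ t, (∫ a', ∫ x', γ * R' t a' x' ∂μS ∂μA)
      = γ * (∫ a', ∫ x', R t a' x' ∂μS ∂μA) + γ * (γ * I - Φ t) := by
    intro t
    have e1 : (fun a' => ∫ x', γ * R' t a' x' ∂μS)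
        = fun a' => γ * (∫ x', R' t a' x' ∂μS) := by
      funext a'; rw [integral_const_mul]
    rw [e1, integral_const_mul, hGeq]; ring
  have hscaleR : ∀ t, (∫ a', ∫ x', γ * R t a' x' ∂μS ∂μA)
      = γ * (∫ a', ∫ x', R t a' x' ∂μS ∂μA) := by
    intro t
    have e1 : (fun a' => ∫ x', γ * R t a' x' ∂μS)
        = fun a' => γ * (∫ x', R t a' x' ∂μS) := by
      funext a'; rw [integral_const_mul]
    rw [e1, integral_const_mul]
  intro s a s'
  rw [hzero s s']
  unfold epicC
  rw [hR', hscale, hscaleR, hGeq, hD]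
  ring
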